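/- Let F be a nonempty set, K ≥ 1 an integer, and L_k, L̃_k : F → ℝ for k = 1,…,K. Let S : ℝ^K → ℝ satisfy the reverse triangle inequality |S(u) − S(v)| ≤ S(|u − v|) for all u, v ∈ ℝ^K. Suppose f̂ ∈ F minimizes f ↦ S(L̃₁(f),…,L̃_K(f)) over F. Then for every f* ∈ F, S(L₁(f̂),…,L_K(f̂)) − S(L₁(f*),…,L_K(f*)) ≤ 2 sup_{f∈F} S(|L₁(f) − L̃₁(f)|, …, |L_K(f) − L̃_K(f)|), where the supremum is taken in [0, +∞]. -/
import Mathlib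

/-- If `f̂` minimizes the scalarized surrogate `S(L̃₁(f),…,L̃_K(f))` and `S`
satisfies the reverse triangle inequality, then the scalarized excess risk of `f̂` is at most
twice the uniform deviation `sup_f S(|L₁(f) − L̃₁(f)|,…,|L_K(f) − L̃_K(f)|)` (supremum in `[0,∞]`). -/
theorem scalarized_excess_risk_bound {F : Type} [Nonempty F] {K : ℕ} (hK : 1 ≤ K)
    (L Lt : Fin K → F → ℝ)
    (S : (Fin K → ℝ) → ℝ)
    (hS : ∀ u v : Fin K → ℝ, |S u - S v| ≤ S fun k => |u k - v k|)
    (fhat : F) (hmin : ∀ f : F, S (fun k => Lt k fhat) ≤ S fun k => Lt k f) :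
    ∀ fstar : F,
      ENNReal.ofReal (S (fun k => L k fhat) - S fun k => L k fstar)
        ≤ 2 * ⨆ f : F, ENNReal.ofReal (S fun k => |L k f - Lt k f|) := by
  intro fstar
  set D : F → ℝ := fun f => S fun k => |L k f - Lt k f| with hD
  have h1 : S (fun k => L k fhat) - S (fun k => Lt k fhat) ≤ D fhat :=
    le_trans (le_abs_self _) (hS _ _)
  have h3 : S (fun k => Lt k fstar) - S (fun k => L k fstar) ≤ D fstar := by
    have := hS (fun k => Lt k fstar) (fun k => L k fstar)
    refine le_trans (le_abs_self _) (le_trans this (le_of_eq ?_))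
    simp [hD, abs_sub_comm]
  have key : S (fun k => L k fhat) - S (fun k => L k fstar) ≤ D fhat + D fstar := by
    have h2 := hmin fstar
    linarith
  calc ENNReal.ofReal (S (fun k => L k fhat) - S fun k => L k fstar)
      ≤ ENNReal.ofReal (D fhat + D fstar) := ENNReal.ofReal_le_ofReal key
    _ ≤ ENNReal.ofReal (D fhat) + ENNReal.ofReal (D fstar) := ENNReal.ofReal_add_le
    _ ≤ (⨆ f : F, ENNReal.ofReal (D f)) + ⨆ f : F, ENNReal.ofReal (D f) :=
        add_le_add (le_iSup (fun f => ENNReal.ofReal (D f)) fhat)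
          (le_iSup (fun f => ENNReal.ofReal (D f)) fstar)
    _ = 2 * ⨆ f : F, ENNReal.ofReal (D f) := (two_mul _).symm
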